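/- Fix a graph on ℕ satisfying property (†): for every finite F ⊆ ℕ and every A ⊆ ℕ, if for every type t over F the set {m ∈ A \ F : m has type t} has positive upper density, then for all but finitely many n, for every type t' over F ∪ {n}, the set {m ∈ A \ (F ∪ {n}) : m has type t'} has positive upper density. Then every subset A ⊆ ℕ of positive upper density contains every countable graph as an induced subgraph. -/

import Mathlib

/-- The upper density of a set of natural numbers. -/
noncomputable def upperDensity (A : Set ℕ) : ℝ :=
  Filter.limsup
    (fun n : ℕ => (∑ m ∈ Finset.Icc 1 n, A.indicator (fun _ => (1 : ℝ)) m) / n)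
    Filter.atTop

/-- `m` has type `t` over the finite set `F` in the graph `G`. -/
def HasType (G : SimpleGraph ℕ) (m : ℕ) (F : Finset ℕ) (t : ℕ → Bool) : Prop :=
  ∀ v ∈ F, (G.Adj m v ↔ t v = true)

open Filter in
lemma pos_upperDensity_infinite {B : Set ℕ} (h : 0 < upperDensity B) : B.Infinite := by
  by_contra hf
  rw [Set.not_infinite] at hf
  have hbound : ∀ n : ℕ, (∑ m ∈ Finset.Icc 1 n, B.indicator (fun _ => (1:ℝ)) m) ≤ hf.toFinset.card := by
    intro n
    classical
    have : ∑ m ∈ Finset.Icc 1 n, B.indicator (fun _ => (1:ℝ)) m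
        = ∑ m ∈ (Finset.Icc 1 n).filter (· ∈ B), (1:ℝ) := by
      rw [Finset.sum_filter]
      refine Finset.sum_congr rfl fun m _ => ?_
      by_cases hm : m ∈ B <;> simp [Set.indicator, hm]
    rw [this, Finset.sum_const, nsmul_eq_mul, mul_one]
    have hsub : (Finset.Icc 1 n).filter (· ∈ B) ⊆ hf.toFinset := by
      intro x hx
      simp only [Finset.mem_filter] at hx
      simpa using hx.2
    exact_mod_cast Finset.card_le_card hsub
  have hto : Tendsto (fun n : ℕ => (∑ m ∈ Finset.Icc 1 n, B.indicator (fun _ => (1:ℝ)) m) / n) atTop (nhds 0) := by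
    have h1 : Tendsto (fun n : ℕ => (hf.toFinset.card : ℝ) / n) atTop (nhds 0) :=
      tendsto_const_div_atTop_nhds_zero_nat _
    refine squeeze_zero (fun n => ?_) (fun n => ?_) h1
    · exact div_nonneg (Finset.sum_nonneg fun m _ => Set.indicator_nonneg (fun _ _ => zero_le_one) m) (Nat.cast_nonneg n)
    · rcases Nat.eq_zero_or_pos n with h0 | h0
      · simp [h0]
      · exact div_le_div_of_nonneg_right (hbound n) (by positivity)
  have := hto.limsup_eq
  rw [upperDensity] at h
  rw [this] at h
  exact lt_irrefl 0 h


def PUD (G : SimpleGraph ℕ) (A : Set ℕ) (F : Finset ℕ) : Prop :=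
  ∀ t : ℕ → Bool, 0 < upperDensity {m | m ∈ A ∧ m ∉ F ∧ HasType G m F t}

lemma step_lemma (G : SimpleGraph ℕ)
    (hdag : ∀ (F : Finset ℕ) (A : Set ℕ),
      (∀ t : ℕ → Bool,
        0 < upperDensity {m | m ∈ A ∧ m ∉ F ∧ HasType G m F t}) →
      ∀ᶠ n in Filter.cofinite, ∀ t' : ℕ → Bool,
        0 < upperDensity {m | m ∈ A ∧ m ∉ insert n F ∧ HasType G m (insert n F) t'})
    (A : Set ℕ) {F : Finset ℕ} (hF : PUD G A F) (t : ℕ → Bool) :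
    ∃ m, (m ∈ A ∧ m ∉ F ∧ HasType G m F t) ∧ PUD G A (insert m F) := by
  have hcof := hdag F A hF
  rw [Filter.eventually_cofinite] at hcof
  have hT : {m | m ∈ A ∧ m ∉ F ∧ HasType G m F t}.Infinite :=
    pos_upperDensity_infinite (hF t)
  obtain ⟨m, hmT, hmg⟩ := (hT.diff hcof).nonempty
  refine ⟨m, hmT, ?_⟩
  intro t'
  exact not_not.mp hmg t'

def GoodList (G : SimpleGraph ℕ) (A : Set ℕ) (H' : SimpleGraph ℕ) (l : List ℕ) : Prop :=
  (∀ i (h : i < l.length), l[i] ∈ A) ∧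
  (∀ i j (hi : i < l.length) (hj : j < l.length), l[i] = l[j] → i = j) ∧
  (∀ i j (hi : i < l.length) (hj : j < l.length), H'.Adj i j ↔ G.Adj l[i] l[j]) ∧
  PUD G A l.toFinset

lemma extend_good (G : SimpleGraph ℕ)
    (hdag : ∀ (F : Finset ℕ) (A : Set ℕ),
      (∀ t : ℕ → Bool,
        0 < upperDensity {m | m ∈ A ∧ m ∉ F ∧ HasType G m F t}) →
      ∀ᶠ n in Filter.cofinite, ∀ t' : ℕ → Bool,
        0 < upperDensity {m | m ∈ A ∧ m ∉ insert n F ∧ HasType G m (insert n F) t'})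
    (A : Set ℕ) (H' : SimpleGraph ℕ) {l : List ℕ} (hl : GoodList G A H' l) :
    ∃ m, GoodList G A H' (l ++ [m]) := by
  classical
  obtain ⟨hA, hinj, hadj, hP⟩ := hl
  set n := l.length with hn
  set t : ℕ → Bool := fun v => decide (∃ i, ∃ h : i < l.length, l[i] = v ∧ H'.Adj i n) with ht
  obtain ⟨m, ⟨hmA, hmF, hmt⟩, hP'⟩ := step_lemma G hdag A hP t
  have hget : ∀ i (h : i < n), (l ++ [m])[i]'(by simp; omega) = l[i] := by
    intro i h
    exact List.getElem_append_left h
  have hgetn : (l ++ [m])[n]'(by simp [hn]) = m := List.getElem_concat_length rfl _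
  have hmem : ∀ i (h : i < n), l[i] ∈ l.toFinset := fun i h =>
    List.mem_toFinset.mpr (List.getElem_mem h)
  have hlen : (l ++ [m]).length = n + 1 := by simp [hn]
  -- adjacency between old vertex i and new vertex
  have hadjnew : ∀ i (h : i < n), (H'.Adj i n ↔ G.Adj l[i] m) := by
    intro i h
    rw [G.adj_comm, hmt l[i] (hmem i h), ht]
    simp only [decide_eq_true_eq]
    constructor
    · intro ha; exact ⟨i, h, rfl, ha⟩
    · rintro ⟨i', h', heq, ha⟩
      rwa [hinj i' i h' h heq] at ha
  refine ⟨m, ?_, ?_, ?_, ?_⟩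
  · intro i h
    rw [hlen] at h
    rcases Nat.lt_or_ge i n with hi | hi
    · rw [hget i hi]; exact hA i hi
    · have : i = n := by omega
      subst this; rw [hgetn]; exact hmA
  · intro i j hi hj heq
    rw [hlen] at hi hj
    rcases Nat.lt_or_ge i n with hi' | hi' <;> rcases Nat.lt_or_ge j n with hj' | hj'
    · rw [hget i hi', hget j hj'] at heq; exact hinj i j hi' hj' heq
    · have : j = n := by omega
      subst this
      rw [hget i hi', hgetn] at heq
      exact absurd (heq ▸ hmem i hi') hmF
    · have : i = n := by omega
      subst this
      rw [hgetn, hget j hj'] at heq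
      exact absurd (show m ∈ l.toFinset from by rw [heq]; exact hmem j hj') hmF
    · omega
  · intro i j hi hj
    rw [hlen] at hi hj
    rcases Nat.lt_or_ge i n with hi' | hi' <;> rcases Nat.lt_or_ge j n with hj' | hj'
    · rw [hget i hi', hget j hj']; exact hadj i j hi' hj'
    · have : j = n := by omega
      subst this
      rw [hget i hi', hgetn]
      exact hadjnew i hi'
    · have : i = n := by omega
      subst this
      rw [hgetn, hget j hj']
      rw [H'.adj_comm, G.adj_comm]
      exact hadjnew j hj'
    · have : i = n := by omega
      have hj2 : j = n := by omega
      subst this; subst hj2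
      rw [hgetn]
      simp [H'.irrefl, G.irrefl]
  · have : (l ++ [m]).toFinset = insert m l.toFinset := by
      ext x; simp [or_comm]
    rw [this]
    exact hP'

lemma main_nat (G : SimpleGraph ℕ)
    (hdag : ∀ (F : Finset ℕ) (A : Set ℕ),
      (∀ t : ℕ → Bool,
        0 < upperDensity {m | m ∈ A ∧ m ∉ F ∧ HasType G m F t}) →
      ∀ᶠ n in Filter.cofinite, ∀ t' : ℕ → Bool,
        0 < upperDensity {m | m ∈ A ∧ m ∉ insert n F ∧ HasType G m (insert n F) t'})
    (A : Set ℕ) (hA : 0 < upperDensity A) (H' : SimpleGraph ℕ) :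
    ∃ g : ℕ → ℕ, Function.Injective g ∧ (∀ n, g n ∈ A) ∧
      ∀ i j, H'.Adj i j ↔ G.Adj (g i) (g j) := by
  classical
  have base : GoodList G A H' [] := by
    refine ⟨fun i h => absurd h (by simp), fun i j hi => absurd hi (by simp),
      fun i j hi => absurd hi (by simp), ?_⟩
    intro t
    have : {m | m ∈ A ∧ m ∉ ([] : List ℕ).toFinset ∧ HasType G m ([] : List ℕ).toFinset t} = A := by
      ext m; simp [HasType]
    rwa [this]
  have hext : ∀ l : List ℕ, ∃ m : ℕ, GoodList G A H' l → GoodList G A H' (l ++ [m]) := by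
    intro l
    by_cases h : GoodList G A H' l
    · obtain ⟨m, hm⟩ := extend_good G hdag A H' h
      exact ⟨m, fun _ => hm⟩
    · exact ⟨0, fun h' => absurd h' h⟩
  choose e he using hext
  obtain ⟨c, hc0, hcs⟩ : ∃ c : ℕ → List ℕ, c 0 = [] ∧ ∀ n, c (n + 1) = c n ++ [e (c n)] :=
    ⟨fun n => Nat.rec [] (fun _ l => l ++ [e l]) n, rfl, fun n => rfl⟩
  have hgood : ∀ n, GoodList G A H' (c n) ∧ (c n).length = n := by
    intro n
    induction n with
    | zero => rw [hc0]; exact ⟨base, rfl⟩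
    | succ n ih => rw [hcs n]; exact ⟨he (c n) ih.1, by simp [ih.2]⟩
  have hpre : ∀ n k, n ≤ k → c n <+: c k := by
    intro n k h
    induction k with
    | zero =>
      have : n = 0 := by omega
      subst this
      exact List.prefix_refl _
    | succ k ih =>
      rcases Nat.lt_or_ge n (k + 1) with h' | h'
      · exact (ih (by omega)).trans ⟨[e (c k)], (hcs k).symm⟩
      · have : n = k + 1 := by omega
        subst this
        exact List.prefix_refl _
  have hlen : ∀ n, (c n).length = n := fun n => (hgood n).2
  have hlt : ∀ n, n < (c (n + 1)).length := fun n => by rw [hlen]; omega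
  set g : ℕ → ℕ := fun n => (c (n + 1))[n]'(hlt n) with hg
  have hgk : ∀ n k (h : n < k), (c k)[n]'(by rw [hlen]; omega) = g n := by
    intro n k h
    exact ((hpre (n + 1) k h).getElem (hlt n)).symm
  refine ⟨g, ?_, ?_, ?_⟩
  · intro i j heq
    set k := max i j + 1 with hk
    have hik : i < k := by omega
    have hjk : j < k := by omega
    exact (hgood k).1.2.1 i j (by rw [hlen]; omega) (by rw [hlen]; omega)
      (by rw [hgk i k hik, hgk j k hjk]; exact heq)
  · intro n
    have := (hgood (n + 1)).1.1 n (hlt n)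
    exact this
  · intro i j
    set k := max i j + 1 with hk
    have hik : i < k := by omega
    have hjk : j < k := by omega
    have := (hgood k).1.2.2.1 i j (by rw [hlen]; omega) (by rw [hlen]; omega)
    rwa [hgk i k hik, hgk j k hjk] at this



/-- If a graph on ℕ satisfies property (†), then every set of positive upper density
contains every countable graph as an induced subgraph. -/
theorem pud_universal (G : SimpleGraph ℕ)
    (hdag : ∀ (F : Finset ℕ) (A : Set ℕ),
      (∀ t : ℕ → Bool,
        0 < upperDensity {m | m ∈ A ∧ m ∉ F ∧ HasType G m F t}) →
      ∀ᶠ n in Filter.cofinite, ∀ t' : ℕ → Bool,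
        0 < upperDensity {m | m ∈ A ∧ m ∉ insert n F ∧ HasType G m (insert n F) t'})
    (A : Set ℕ) (hA : 0 < upperDensity A)
    (V : Type) [Countable V] (H : SimpleGraph V) :
    ∃ f : V → ℕ, Function.Injective f ∧ (∀ v, f v ∈ A) ∧
      ∀ u v : V, H.Adj u v ↔ G.Adj (f u) (f v) := by
  obtain ⟨e, he⟩ := exists_injective_nat V
  set H' : SimpleGraph ℕ :=
    { Adj := fun i j => ∃ u v : V, e u = i ∧ e v = j ∧ H.Adj u v
      symm := by
        constructor
        rintro i j ⟨u, v, hu, hv, huv⟩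
        exact ⟨v, u, hv, hu, huv.symm⟩
      loopless := by
        constructor
        rintro i ⟨u, v, hu, hv, huv⟩
        rw [← hv] at hu
        exact H.irrefl (he hu ▸ huv) } with hH'
  obtain ⟨g, hginj, hgA, hgadj⟩ := main_nat G hdag A hA H'
  refine ⟨g ∘ e, hginj.comp he, fun v => hgA (e v), fun u v => ?_⟩
  simp only [Function.comp_apply]
  rw [← hgadj (e u) (e v)]
  constructor
  · intro h
    exact ⟨u, v, rfl, rfl, h⟩
  · rintro ⟨u', v', hu', hv', h⟩
    rwa [he hu', he hv'] at h
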